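/- Let m ≤ n be positive integers and let g be an odd integer such that g is not congruent to 1 modulo 2^m and g is not congruent to -1 modulo 2^m. Then ω_g(2^n) = 2^{n-m}·ω_g(2^m). -/

import Mathlib

/-- The multiplicative order of `g` modulo `2^n`: the least positive integer `k`
such that `g ^ k ≡ 1 (mod 2^n)`. -/
noncomputable def multOrd (g : ℤ) (n : ℕ) : ℕ :=
  sInf {k : ℕ | 0 < k ∧ g ^ k ≡ 1 [ZMOD (2 ^ n : ℤ)]}

private lemma modEq_one_iff (N a : ℤ) : a ≡ 1 [ZMOD N] ↔ N ∣ a - 1 := by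
  rw [Int.modEq_iff_dvd, dvd_sub_comm]

private lemma odd_not_two_dvd {u : ℤ} (h : Odd u) : ¬ (2:ℤ) ∣ u := by
  obtain ⟨k, rfl⟩ := h; omega

private lemma cancel_odd {a u : ℤ} {j : ℕ} (hu : Odd u) (h : (2:ℤ)^j ∣ a * u) :
    (2:ℤ)^j ∣ a :=
  Int.prime_two.pow_dvd_of_dvd_mul_right j (odd_not_two_dvd hu) h

private lemma cancel_two {x : ℤ} {j : ℕ} (h : (2:ℤ)^(j+1) ∣ 2 * x) : (2:ℤ)^j ∣ x := by
  have h2 : (2:ℤ)^(j+1) = 2 * 2^j := by ring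
  rw [h2] at h
  exact (mul_dvd_mul_iff_left (by norm_num : (2:ℤ) ≠ 0)).mp h

private lemma two_pow_dvd {g : ℤ} (hg : Odd g) (k : ℕ) :
    (2:ℤ)^(k+1) ∣ g ^ (2^k) - 1 := by
  induction k with
  | zero =>
    obtain ⟨j, rfl⟩ := hg
    simp
  | succ k ih =>
    have hx : g ^ (2^(k+1)) - 1 = (g ^ (2^k) - 1) * (g ^ (2^k) + 1) := by
      rw [pow_succ, pow_mul]; ring
    have h2 : (2:ℤ) ∣ g ^ (2^k) + 1 := by
      obtain ⟨j, hj⟩ := hg.pow (n := 2^k)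
      exact ⟨j + 1, by omega⟩
    rw [hx, pow_succ]
    exact mul_dvd_mul ih h2

private lemma multOrd_spec {g : ℤ} (hg : Odd g) {n : ℕ} (hn : 0 < n) :
    0 < multOrd g n ∧ g ^ multOrd g n ≡ 1 [ZMOD (2 ^ n : ℤ)] := by
  have hd : (2:ℤ)^n ∣ g ^ (2^(n-1)) - 1 := by
    have := two_pow_dvd hg (n-1)
    rwa [Nat.sub_add_cancel hn] at this
  have hmem : (2^(n-1) : ℕ) ∈ {k : ℕ | 0 < k ∧ g ^ k ≡ 1 [ZMOD (2 ^ n : ℤ)]} :=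
    ⟨Nat.pow_pos (by norm_num), (modEq_one_iff _ _).mpr hd⟩
  exact Nat.sInf_mem ⟨_, hmem⟩

private lemma multOrd_le {g : ℤ} {n k : ℕ} (hk : 0 < k)
    (h : g ^ k ≡ 1 [ZMOD (2 ^ n : ℤ)]) : multOrd g n ≤ k :=
  Nat.sInf_le ⟨hk, h⟩

private lemma multOrd_dvd {g : ℤ} (hg : Odd g) {n : ℕ} (hn : 0 < n) {k : ℕ}
    (h : g ^ k ≡ 1 [ZMOD (2 ^ n : ℤ)]) : multOrd g n ∣ k := by
  obtain ⟨hdpos, hdmod⟩ := multOrd_spec hg hn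
  set d := multOrd g n with hd
  have hk : d * (k / d) + k % d = k := Nat.div_add_mod k d
  have hr : g ^ (k % d) ≡ 1 [ZMOD (2 ^ n : ℤ)] := by
    have h1 : g ^ k = (g ^ d) ^ (k / d) * g ^ (k % d) := by
      rw [← pow_mul, ← pow_add, hk]
    have h2 : (g ^ d) ^ (k / d) * g ^ (k % d) ≡ 1 ^ (k / d) * g ^ (k % d)
        [ZMOD (2 ^ n : ℤ)] := (hdmod.pow _).mul_right _
    calc g ^ (k % d) = 1 ^ (k/d) * g ^ (k % d) := by ring
      _ ≡ (g ^ d) ^ (k / d) * g ^ (k % d) [ZMOD (2 ^ n : ℤ)] := h2.symm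
      _ = g ^ k := h1.symm
      _ ≡ 1 [ZMOD (2 ^ n : ℤ)] := h
  rcases Nat.eq_zero_or_pos (k % d) with h0 | hpos
  · exact Nat.dvd_of_mod_eq_zero h0
  · have := multOrd_le hpos hr
    have := Nat.mod_lt k hdpos
    omega

/-- Base case: the order modulo `2^m` is not achieved modulo `2^(m+1)`. -/
private lemma base_exact {m : ℕ} (hm : 0 < m) {g : ℤ} (hg : Odd g)
    (h1 : ¬ g ≡ 1 [ZMOD (2 ^ m : ℤ)]) (h2 : ¬ g ≡ -1 [ZMOD (2 ^ m : ℤ)]) :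
    ¬ (2:ℤ)^(m+1) ∣ g ^ (multOrd g m) - 1 := by
  intro H
  obtain ⟨hdpos, hdmod⟩ := multOrd_spec hg hm
  set d := multOrd g m with hdd
  -- d divides 2 ^ (m-1), hence is a power of 2
  have hdvd : d ∣ 2 ^ (m - 1) := by
    apply multOrd_dvd hg hm
    rw [modEq_one_iff]
    have := two_pow_dvd hg (m-1)
    rwa [Nat.sub_add_cancel hm] at this
  obtain ⟨t, ht, hdt⟩ := (Nat.dvd_prime_pow Nat.prime_two).mp hdvd
  have hdne1 : d ≠ 1 := by
    intro hd1
    apply h1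
    have := hdmod
    rw [hd1, pow_one] at this
    exact this
  have ht1 : 1 ≤ t := by
    rcases Nat.eq_zero_or_pos t with h0 | h; · simp [h0] at hdt; omega
    exact h
  rcases Nat.lt_or_ge t 2 with ht2 | ht2
  · -- t = 1, d = 2
    have hd2 : d = 2 := by interval_cases t <;> simpa using hdt
    rw [hd2] at H
    obtain ⟨k, rfl⟩ := hg
    have hfac : (2*k+1) ^ 2 - 1 = (2*k) * (2*k+2) := by ring
    rw [hfac] at H
    rcases Int.even_or_odd k with ⟨j, hj⟩ | hk
    · -- k even : 2k+2 = 2*(k+1), k+1 odd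
      have hodd : Odd (k + 1) := ⟨j, by omega⟩
      have : (2:ℤ)^m ∣ (2*k) * (k+1) := by
        apply cancel_two
        have : (2:ℤ)*k * (2*k+2) = 2 * ((2*k) * (k+1)) := by ring
        rwa [this] at H
      have hdvd1 : (2:ℤ)^m ∣ 2*k := cancel_odd hodd this
      exact h1 ((modEq_one_iff _ _).mpr (by simpa using hdvd1))
    · -- k odd : 2k = 2*k with k odd
      have : (2:ℤ)^m ∣ (2*k+2) * k := by
        apply cancel_two
        have : (2:ℤ)*k * (2*k+2) = 2 * ((2*k+2) * k) := by ring
        rwa [this] at H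
      have hdvd1 : (2:ℤ)^m ∣ 2*k+2 := cancel_odd hk this
      apply h2
      rw [Int.modEq_iff_dvd]
      have : (-1 : ℤ) - (2*k+1) = -(2*k+2) := by ring
      rw [this]
      exact hdvd1.neg_right
  · -- t ≥ 2 : d = 2*e with e = 2^(t-1) even, e ≥ 2
    set e := 2 ^ (t - 1) with he
    have hde : d = 2 * e := by
      rw [hdt, he, ← pow_succ']
      congr 1; omega
    have heeven : ∃ f, e = 2 * f := ⟨2^(t-2), by rw [he, ← pow_succ']; congr 1; omega⟩
    obtain ⟨f, hf⟩ := heeven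
    -- 8 ∣ g^e - 1 since e even
    have h8 : (8:ℤ) ∣ g ^ e - 1 := by
      have h8' : (8:ℤ) ∣ g^2 - 1 := by
        obtain ⟨j, rfl⟩ := hg
        obtain ⟨i, hi⟩ := Int.even_mul_succ_self j
        exact ⟨i, by nlinarith⟩
      have : g ^ e - 1 = (∑ i ∈ Finset.range f, (g^2)^i) * (g^2 - 1) := by
        rw [hf, pow_mul, geom_sum_mul]
      rw [this]
      exact h8'.mul_left _
    obtain ⟨w, hw⟩ : (4:ℤ) ∣ g ^ e - 1 := dvd_trans (by norm_num) h8
    have hu : g ^ e + 1 = 2 * (2*w + 1) := by omega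
    have hfac : g ^ d - 1 = (g ^ e - 1) * (g ^ e + 1) := by
      rw [hde, two_mul, pow_add]; ring
    rw [hfac, hu] at H
    have : (2:ℤ)^m ∣ (g^e - 1) * (2*w+1) := by
      apply cancel_two
      have heq : (g^e - 1) * (2 * (2*w+1)) = 2 * ((g^e-1) * (2*w+1)) := by ring
      rwa [heq] at H
    have hdvd1 : (2:ℤ)^m ∣ g^e - 1 := cancel_odd ⟨w, by ring⟩ this
    have hle : d ≤ e := multOrd_le (by positivity) ((modEq_one_iff _ _).mpr hdvd1)
    omega

/-- Inductive step. -/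
private lemma step_lemma {n : ℕ} (hn : 2 ≤ n) {g : ℤ} (hg : Odd g)
    (hne : ¬ (2:ℤ)^(n+1) ∣ g ^ (multOrd g n) - 1) :
    multOrd g (n+1) = 2 * multOrd g n ∧
      ¬ (2:ℤ)^(n+2) ∣ g ^ (multOrd g (n+1)) - 1 := by
  obtain ⟨hDpos, hDmod⟩ := multOrd_spec hg (by omega : 0 < n)
  set D := multOrd g n with hDD
  have hDdvd : (2:ℤ)^n ∣ g ^ D - 1 := (modEq_one_iff _ _).mp hDmod
  obtain ⟨w, hw⟩ : (4:ℤ) ∣ g ^ D - 1 := by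
    refine dvd_trans ?_ hDdvd
    calc (4:ℤ) = 2^2 := by norm_num
      _ ∣ 2^n := pow_dvd_pow 2 hn
  have hu : g ^ D + 1 = 2 * (2*w + 1) := by omega
  have hfac : g ^ (2*D) - 1 = (g ^ D - 1) * (g ^ D + 1) := by
    rw [two_mul, pow_add]; ring
  have h2D : (2:ℤ)^(n+1) ∣ g ^ (2*D) - 1 := by
    rw [hfac, hu, pow_succ]
    have heq : (g^D - 1) * (2 * (2*w+1)) = ((g^D-1) * 2) * (2*w+1) := by ring
    rw [heq]
    exact Dvd.dvd.mul_right (mul_dvd_mul hDdvd dvd_rfl) _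
  have h2Dmem : g ^ (2*D) ≡ 1 [ZMOD (2 ^ (n+1) : ℤ)] := (modEq_one_iff _ _).mpr h2D
  -- multOrd g (n+1) = 2 * D
  have hmain : multOrd g (n+1) = 2 * D := by
    obtain ⟨hD'pos, hD'mod⟩ := multOrd_spec hg (by omega : 0 < n + 1)
    set D' := multOrd g (n+1) with hDD'
    have hle : D' ≤ 2 * D := multOrd_le (by omega) h2Dmem
    have hDdvdD' : D ∣ D' := by
      apply multOrd_dvd hg (by omega : 0 < n)
      exact hD'mod.of_dvd (pow_dvd_pow 2 (by omega))
    have hne' : D' ≠ D := by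
      intro hEq
      apply hne
      rw [← hEq]
      exact (modEq_one_iff _ _).mp hD'mod
    obtain ⟨c, hc⟩ := hDdvdD'
    have : c = 2 := by
      rcases Nat.lt_or_ge c 2 with h | h
      · interval_cases c <;> omega
      · nlinarith
    subst this
    omega
  refine ⟨hmain, ?_⟩
  rw [hmain]
  intro H
  rw [hfac, hu] at H
  apply hne
  have : (2:ℤ)^(n+1) ∣ (g^D - 1) * (2*w+1) := by
    apply cancel_two
    have heq : (g^D - 1) * (2 * (2*w+1)) = 2 * ((g^D-1) * (2*w+1)) := by ring
    rwa [heq] at H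
  exact cancel_odd ⟨w, by ring⟩ this

theorem order_power_relation (m n : ℕ) (hm : 0 < m) (hmn : m ≤ n) (g : ℤ) (hg : Odd g)
    (h1 : ¬ g ≡ 1 [ZMOD (2 ^ m : ℤ)]) (h2 : ¬ g ≡ -1 [ZMOD (2 ^ m : ℤ)]) :
    multOrd g n = 2 ^ (n - m) * multOrd g m := by
  have hm2 : 2 ≤ m := by
    rcases Nat.lt_or_ge m 2 with h | h
    · exfalso
      interval_cases m
      apply h1
      rw [modEq_one_iff]
      obtain ⟨k, rfl⟩ := hg
      exact ⟨k, by ring⟩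
    · exact h
  have key : ∀ N, m ≤ N → multOrd g N = 2 ^ (N - m) * multOrd g m ∧
      ¬ (2:ℤ)^(N+1) ∣ g ^ (multOrd g N) - 1 := by
    intro N hN
    induction N, hN using Nat.le_induction with
    | base => exact ⟨by simp, base_exact hm hg h1 h2⟩
    | succ N hN ih =>
      obtain ⟨ih1, ih2⟩ := ih
      obtain ⟨s1, s2⟩ := step_lemma (le_trans hm2 hN) hg ih2
      refine ⟨?_, s2⟩
      rw [s1, ih1, ← mul_assoc]
      congr 1
      rw [← pow_succ']
      congr 1
      omega
  exact (key n hmn).1
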